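/- Let f ≥ 1 and n be natural numbers with f + 2 ≤ n ≤ 3f, and set c = n − f. Then there is no function D from finite multisets of real numbers to real numbers satisfying both of the following: (Validity) for every multiset C of c reals taken from [0,1] and every multiset B of f reals taken from [0,1], D(C + B) lies in the closed interval [min C, max C]; and (Agreement) for every multiset C of c reals taken from [0,1] with max C − min C > 0 and all multisets B, B′ of f reals taken from [0,1], |D(C + B) − D(C + B′)| < max C − min C. (This is the one-round core of the paper's Theorem: no algorithm solves Simple Approximate Agreement in Buhrman et al.'s mobile Byzantine model (M4) when n ≤ 3f.) -/

import Mathlib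

open Multiset

/-- The minimum element of a (nonempty, finite) multiset of reals. -/
noncomputable def mmin (V : Multiset ℝ) : ℝ := sInf {x : ℝ | x ∈ V}

/-- The maximum element of a (nonempty, finite) multiset of reals. -/
noncomputable def mmax (V : Multiset ℝ) : ℝ := sSup {x : ℝ | x ∈ V}

/-- The multiset obtained from `N` by deleting its `t` smallest and `t` largest
elements (counted with multiplicity). -/
noncomputable def trim (t : ℕ) (N : Multiset ℝ) : Multiset ℝ :=
  (((N.sort (· ≤ ·)).drop t).take (Multiset.card N - 2 * t) : List ℝ)

/-- The arithmetic mean of a (nonempty) finite multiset of reals. -/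
noncomputable def mean (R : Multiset ℝ) : ℝ := R.sum / (Multiset.card R : ℝ)

lemma mmin_replicate (r : ℕ) (hr : r ≠ 0) (v : ℝ) :
    mmin (Multiset.replicate r v) = v := by
  have h : {x : ℝ | x ∈ Multiset.replicate r v} = {v} := by
    ext x; simp [Multiset.mem_replicate, hr]
  simp [mmin, h]

lemma mmax_replicate (r : ℕ) (hr : r ≠ 0) (v : ℝ) :
    mmax (Multiset.replicate r v) = v := by
  have h : {x : ℝ | x ∈ Multiset.replicate r v} = {v} := by
    ext x; simp [Multiset.mem_replicate, hr]
  simp [mmax, h]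

lemma mix_set (a b : ℕ) (ha : a ≠ 0) (hb : b ≠ 0) :
    {x : ℝ | x ∈ Multiset.replicate a (0:ℝ) + Multiset.replicate b (1:ℝ)}
      = {0, 1} := by
  ext x; simp [Multiset.mem_replicate, ha, hb]

lemma mmin_mix (a b : ℕ) (ha : a ≠ 0) (hb : b ≠ 0) :
    mmin (Multiset.replicate a (0:ℝ) + Multiset.replicate b (1:ℝ)) = 0 := by
  rw [mmin, mix_set a b ha hb, csInf_pair]
  norm_num

lemma mmax_mix (a b : ℕ) (ha : a ≠ 0) (hb : b ≠ 0) :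
    mmax (Multiset.replicate a (0:ℝ) + Multiset.replicate b (1:ℝ)) = 1 := by
  rw [mmax, mix_set a b ha hb, csSup_pair]
  norm_num

/-- Lower bound for Buhrman et al.'s model (M4): no one-round decision function
exists when `f + 2 ≤ n ≤ 3f`, with `c = n - f` correct values and `f`
Byzantine values per round. -/
theorem no_simple_approx_agreement_M4 (f n : ℕ) (hf : 1 ≤ f)
    (hn₁ : f + 2 ≤ n) (hn₂ : n ≤ 3 * f) :
    ¬ ∃ D : Multiset ℝ → ℝ,
      (∀ C B : Multiset ℝ,
        Multiset.card C = n - f → (∀ x ∈ C, x ∈ Set.Icc (0 : ℝ) 1) →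
        Multiset.card B = f → (∀ x ∈ B, x ∈ Set.Icc (0 : ℝ) 1) →
        D (C + B) ∈ Set.Icc (mmin C) (mmax C)) ∧
      (∀ C B B' : Multiset ℝ,
        Multiset.card C = n - f → (∀ x ∈ C, x ∈ Set.Icc (0 : ℝ) 1) →
        mmax C - mmin C > 0 →
        Multiset.card B = f → (∀ x ∈ B, x ∈ Set.Icc (0 : ℝ) 1) →
        Multiset.card B' = f → (∀ x ∈ B', x ∈ Set.Icc (0 : ℝ) 1) →
        |D (C + B) - D (C + B')| < mmax C - mmin C) := by
  rintro ⟨D, hV, hA⟩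
  set c := n - f with hc
  have hc2 : 2 ≤ c := by omega
  have hc2f : c ≤ 2 * f := by omega
  set a := min f (c - 1) with hadef
  set b := c - a with hbdef
  have ha1 : 1 ≤ a := by omega
  have haf : a ≤ f := by omega
  have hb1 : 1 ≤ b := by omega
  have hbf : b ≤ f := by omega
  have hab : a + b = c := by omega
  -- the multisets
  set Cm : Multiset ℝ := Multiset.replicate a (0:ℝ) + Multiset.replicate b (1:ℝ) with hCm
  set C0 : Multiset ℝ := Multiset.replicate c (0:ℝ) with hC0
  set C1 : Multiset ℝ := Multiset.replicate c (1:ℝ) with hC1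
  set B0 : Multiset ℝ := Multiset.replicate f (0:ℝ) with hB0
  set B1 : Multiset ℝ := Multiset.replicate f (1:ℝ) with hB1
  set X0 : Multiset ℝ := Multiset.replicate (f - b) (0:ℝ) + Multiset.replicate b (1:ℝ) with hX0
  set X1 : Multiset ℝ := Multiset.replicate a (0:ℝ) + Multiset.replicate (f - a) (1:ℝ) with hX1
  have hmem : ∀ (M : Multiset ℝ), (∀ x ∈ M, x = (0:ℝ) ∨ x = 1) →
      (∀ x ∈ M, x ∈ Set.Icc (0:ℝ) 1) := by
    intro M h x hx
    rcases h x hx with h01 | h01 <;> simp [h01]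
  have hmemCm : ∀ x ∈ Cm, x ∈ Set.Icc (0:ℝ) 1 := by
    apply hmem; intro x hx
    rcases Multiset.mem_add.1 hx with h | h
    · exact Or.inl (Multiset.eq_of_mem_replicate h)
    · exact Or.inr (Multiset.eq_of_mem_replicate h)
  have hmemC0 : ∀ x ∈ C0, x ∈ Set.Icc (0:ℝ) 1 := by
    apply hmem; intro x hx
    first
      | exact Or.inl (Multiset.eq_of_mem_replicate hx)
      | exact Or.inr (Multiset.eq_of_mem_replicate hx)
  have hmemC1 : ∀ x ∈ C1, x ∈ Set.Icc (0:ℝ) 1 := by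
    apply hmem; intro x hx
    first
      | exact Or.inl (Multiset.eq_of_mem_replicate hx)
      | exact Or.inr (Multiset.eq_of_mem_replicate hx)
  have hmemB0 : ∀ x ∈ B0, x ∈ Set.Icc (0:ℝ) 1 := by
    apply hmem; intro x hx
    first
      | exact Or.inl (Multiset.eq_of_mem_replicate hx)
      | exact Or.inr (Multiset.eq_of_mem_replicate hx)
  have hmemB1 : ∀ x ∈ B1, x ∈ Set.Icc (0:ℝ) 1 := by
    apply hmem; intro x hx
    first
      | exact Or.inl (Multiset.eq_of_mem_replicate hx)
      | exact Or.inr (Multiset.eq_of_mem_replicate hx)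
  have hmemX0 : ∀ x ∈ X0, x ∈ Set.Icc (0:ℝ) 1 := by
    apply hmem; intro x hx
    rcases Multiset.mem_add.1 hx with h | h
    · exact Or.inl (Multiset.eq_of_mem_replicate h)
    · exact Or.inr (Multiset.eq_of_mem_replicate h)
  have hmemX1 : ∀ x ∈ X1, x ∈ Set.Icc (0:ℝ) 1 := by
    apply hmem; intro x hx
    rcases Multiset.mem_add.1 hx with h | h
    · exact Or.inl (Multiset.eq_of_mem_replicate h)
    · exact Or.inr (Multiset.eq_of_mem_replicate h)
  -- cards
  have hcardCm : Multiset.card Cm = n - f := by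
    simp [hCm, Multiset.card_replicate]; omega
  have hcardC0 : Multiset.card C0 = n - f := by simp [hC0]; exact hc
  have hcardC1 : Multiset.card C1 = n - f := by simp [hC1]; exact hc
  have hcardB0 : Multiset.card B0 = f := by simp [hB0]
  have hcardB1 : Multiset.card B1 = f := by simp [hB1]
  have hcardX0 : Multiset.card X0 = f := by
    simp [hX0, Multiset.card_replicate]; omega
  have hcardX1 : Multiset.card X1 = f := by
    simp [hX1, Multiset.card_replicate]; omega
  -- indistinguishability: same received multisets
  have key0 : Cm + B0 = C0 + X0 := by
    ext x
    simp only [hCm, hC0, hB0, hX0, Multiset.count_add, Multiset.count_replicate]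
    split_ifs <;> omega
  have key1 : Cm + B1 = C1 + X1 := by
    ext x
    simp only [hCm, hC1, hB1, hX1, Multiset.count_add, Multiset.count_replicate]
    split_ifs <;> omega
  have hne0 : a ≠ 0 := by omega
  have hne1 : b ≠ 0 := by omega
  have hnec : c ≠ 0 := by omega
  -- validity forces the decisions
  have h0 : D (Cm + B0) = 0 := by
    have := hV C0 X0 hcardC0 hmemC0 hcardX0 hmemX0
    rw [mmin_replicate c hnec, mmax_replicate c hnec] at this
    rw [key0]
    exact le_antisymm this.2 this.1
  have h1 : D (Cm + B1) = 1 := by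
    have := hV C1 X1 hcardC1 hmemC1 hcardX1 hmemX1
    rw [mmin_replicate c hnec, mmax_replicate c hnec] at this
    rw [key1]
    exact le_antisymm this.2 this.1
  -- agreement contradiction
  have hdiam : mmax Cm - mmin Cm > 0 := by
    rw [hCm, mmax_mix a b hne0 hne1, mmin_mix a b hne0 hne1]; norm_num
  have := hA Cm B0 B1 hcardCm hmemCm hdiam hcardB0 hmemB0 hcardB1 hmemB1
  rw [h0, h1, hCm, mmax_mix a b hne0 hne1, mmin_mix a b hne0 hne1] at this
  norm_num at this
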